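/- A binary relation ⪰ on a convex subset C of ℝ^n satisfies extended mixture cancellation if and only if ⪰ is reflexive, transitive, and satisfies rational mixture independence. -/

import Mathlib

/-- Extended mixture cancellation for a relation on a subset of a real vector space. -/
def ExtMixCancel {V : Type*} [AddCommGroup V] [Module ℝ V]
    (C : Set V) (R : V → V → Prop) : Prop :=
  ∀ (n : ℕ) (a b : Fin (n + 1) → V),
    (∀ i, a i ∈ C) → (∀ i, b i ∈ C) →
    (∑ i, a i = ∑ i, b i) →
    (∃ k, k ≤ n ∧ (∀ i : Fin (n + 1), (i : ℕ) < k → R (a i) (b i)) ∧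
      (∀ i : Fin (n + 1), k ≤ (i : ℕ) → a i = a (Fin.last n) ∧ b i = b (Fin.last n))) →
    R (b (Fin.last n)) (a (Fin.last n))

/-- Rational mixture independence: for every rational `r ∈ (0, 1]`,
`a ⪰ b` iff `r•a + (1-r)•c ⪰ r•b + (1-r)•c`. -/
def RatMixIndep {V : Type*} [AddCommGroup V] [Module ℝ V]
    (C : Set V) (R : V → V → Prop) : Prop :=
  ∀ a ∈ C, ∀ b ∈ C, ∀ c ∈ C, ∀ r : ℚ, 0 < r → r ≤ 1 →
    (R a b ↔ R ((r : ℝ) • a + (1 - (r : ℝ)) • c) ((r : ℝ) • b + (1 - (r : ℝ)) • c))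

section Helpers
variable {V : Type*} [AddCommGroup V] [Module ℝ V]

lemma aux_card_filter (N k : ℕ) (hk : k < N) :
    (Finset.univ.filter (fun i : Fin N => (i:ℕ) < k)).card = k := by
  have : (Finset.univ.filter (fun i : Fin N => (i:ℕ) < k)) = Finset.Iio (⟨k, hk⟩ : Fin N) := by
    ext i; simp [Fin.lt_def]
  rw [this, Fin.card_Iio]

lemma aux_sum_ite (M p : ℕ) (hp : p < M) (u v : V) :
    ∑ i : Fin M, (if (i:ℕ) < p then u else v) = p • u + (M - p) • v := by
  rw [Finset.sum_ite, Finset.sum_const, Finset.sum_const, aux_card_filter M p hp]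
  have h := Finset.card_filter_add_card_filter_not
    (s := (Finset.univ : Finset (Fin M))) (p := fun i : Fin M => (i:ℕ) < p)
  rw [aux_card_filter M p hp, Finset.card_univ, Fintype.card_fin] at h
  have h2 : (Finset.univ.filter (fun x : Fin M => ¬ (x:ℕ) < p)).card = M - p := by omega
  rw [h2]

lemma aux_mean_mem {C : Set V} (hC : Convex ℝ C) {ι : Type*} {s : Finset ι} {z : ι → V}
    (hz : ∀ i ∈ s, z i ∈ C) (hcard : s.card ≠ 0) :
    ((s.card : ℝ))⁻¹ • ∑ i ∈ s, z i ∈ C := by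
  rw [Finset.smul_sum]
  refine hC.sum_mem (fun i _ => by positivity) ?_ hz
  rw [Finset.sum_const, nsmul_eq_mul, mul_inv_cancel₀ (by exact_mod_cast hcard)]

lemma aux_two_block {C : Set V} {R : V → V → Prop}
    (h : ExtMixCancel C R) {x y u v : V} (hx : x ∈ C) (hy : y ∈ C) (hu : u ∈ C) (hv : v ∈ C)
    (p q : ℕ) (hp : 0 < p) (hq : 0 < q)
    (hsum : p • x + q • u = p • y + q • v) (hxy : R x y) : R v u := by
  obtain ⟨n', hn'⟩ : ∃ n', n' + 1 = p + q := ⟨p + q - 1, by omega⟩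
  have hpn : p < n' + 1 := by omega
  have hlast : ¬ ((Fin.last n' : ℕ) < p) := by simp only [Fin.val_last]; omega
  have hq' : n' + 1 - p = q := by omega
  have := h n' (fun i => if (i:ℕ) < p then x else u) (fun i => if (i:ℕ) < p then y else v)
    (fun i => by split <;> assumption)
    (fun i => by split <;> assumption)
    (by rw [aux_sum_ite _ p hpn, aux_sum_ite _ p hpn, hq']; exact hsum)
    ⟨p, by omega, fun i hi => by simp only [hi, if_pos]; exact hxy,
      fun i hi => by simp [not_lt.mpr hi, show ¬ n' < p by omega]⟩
  simpa only [hlast, if_neg, not_false_iff] using this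

end Helpers

section Fwd
variable {V : Type*} [AddCommGroup V] [Module ℝ V] {C : Set V} {R : V → V → Prop}

lemma aux_fwd_refl (h : ExtMixCancel C R) : ∀ a ∈ C, R a a := by
  intro a haC
  have := h 0 (fun _ => a) (fun _ => a) (fun _ => haC) (fun _ => haC) rfl
    ⟨0, le_refl 0, fun i hi => absurd hi (by omega), fun i _ => ⟨rfl, rfl⟩⟩
  exact this

lemma aux_fwd_trans (h : ExtMixCancel C R) :
    ∀ a ∈ C, ∀ b ∈ C, ∀ c ∈ C, R a b → R b c → R a c := by
  intro a ha b hb c hc hab hbc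
  have := h 2 ![a, b, c] ![b, c, a]
    (fun i => by fin_cases i <;> simpa)
    (fun i => by fin_cases i <;> simpa)
    (by simp [Fin.sum_univ_three]; abel)
    ⟨2, le_refl 2, fun i hi => by
        fin_cases i
        · simpa using hab
        · simpa using hbc
        · simp at hi,
      fun i hi => by
        fin_cases i
        · simp at hi
        · simp at hi
        · exact ⟨rfl, rfl⟩⟩
  simpa using this

lemma aux_fwd_indep (hC : Convex ℝ C) (h : ExtMixCancel C R) : RatMixIndep C R := by
  intro a ha b hb c hc r hr0 hr1
  set p : ℕ := r.num.toNat with hpdef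
  set q : ℕ := r.den with hqdef
  have hp0 : 0 < p := by
    have := Rat.num_pos.mpr hr0
    omega
  have hq0 : 0 < q := r.pos
  have hnum : ((r.num : ℤ) : ℝ) = (p : ℝ) := by
    rw [hpdef]
    exact_mod_cast (Int.toNat_of_nonneg (le_of_lt (Rat.num_pos.mpr hr0))).symm
  have hqr : (q : ℝ) * (r : ℝ) = (p : ℝ) := by
    rw [Rat.cast_def, ← hnum, hqdef]
    have : ((r.den : ℕ) : ℝ) ≠ 0 := by exact_mod_cast r.den_nz
    field_simp
  have h0r : (0:ℝ) ≤ (r:ℝ) := by exact_mod_cast le_of_lt hr0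
  have h1r : (r:ℝ) ≤ 1 := by exact_mod_cast hr1
  have hm : (r:ℝ) • a + (1 - (r:ℝ)) • c ∈ C := hC ha hc h0r (by linarith) (by ring)
  have hm' : (r:ℝ) • b + (1 - (r:ℝ)) • c ∈ C := hC hb hc h0r (by linarith) (by ring)
  set m : V := (r:ℝ) • a + (1 - (r:ℝ)) • c with hmdef
  set m' : V := (r:ℝ) • b + (1 - (r:ℝ)) • c with hm'def
  have key : (p:ℝ) • a + (q:ℝ) • m' = (p:ℝ) • b + (q:ℝ) • m := by
    rw [hmdef, hm'def]
    match_scalars <;> linarith [hqr]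
  constructor
  · intro hab
    refine aux_two_block h ha hb hm' hm p q hp0 hq0 ?_ hab
    simp only [← Nat.cast_smul_eq_nsmul ℝ]
    exact key
  · intro hmm'
    refine aux_two_block h hm hm' hb ha q p hq0 hp0 ?_ hmm'
    simp only [← Nat.cast_smul_eq_nsmul ℝ]
    linear_combination (norm := module) -key

end Fwd

section Bwd
variable {V : Type*} [AddCommGroup V] [Module ℝ V] {C : Set V} {R : V → V → Prop}

lemma aux_backward (hC : Convex ℝ C) (hrefl : ∀ a ∈ C, R a a)
    (htrans : ∀ a ∈ C, ∀ b ∈ C, ∀ c ∈ C, R a b → R b c → R a c)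
    (hind : RatMixIndep C R) : ExtMixCancel C R := by
  rintro n a b ha hb hsum ⟨k, hkn, hRk, htail⟩
  rcases Nat.eq_zero_or_pos k with hk0 | hk1
  · -- k = 0 : everything constant, so a last = b last and reflexivity applies
    subst hk0
    have h1 : ∑ i, a i = (n+1) • a (Fin.last n) := by
      rw [Finset.sum_congr rfl (fun i _ => (htail i (Nat.zero_le _)).1), Finset.sum_const,
        Finset.card_univ, Fintype.card_fin]
    have h2 : ∑ i, b i = (n+1) • b (Fin.last n) := by
      rw [Finset.sum_congr rfl (fun i _ => (htail i (Nat.zero_le _)).2), Finset.sum_const,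
        Finset.card_univ, Fintype.card_fin]
    have h3 : ((n+1 : ℕ) : ℝ) • a (Fin.last n) = ((n+1 : ℕ) : ℝ) • b (Fin.last n) := by
      rw [Nat.cast_smul_eq_nsmul, Nat.cast_smul_eq_nsmul, ← h1, ← h2, hsum]
    have h4 : a (Fin.last n) = b (Fin.last n) :=
      smul_right_injective V (by positivity) h3
    rw [← h4]
    exact hrefl _ (ha _)
  · -- main case : 1 ≤ k
    have hn1 : 1 ≤ n := le_trans hk1 hkn
    have hnR : ((n : ℕ) : ℝ) ≠ 0 := Nat.cast_ne_zero.mpr (by omega)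
    obtain ⟨g, hg⟩ : ∃ g : ℕ → Fin (n+1) → V,
        g = fun (j : ℕ) (i : Fin (n+1)) => if (i:ℕ) < j then b i else a i := ⟨_, rfl⟩
    obtain ⟨f, hf⟩ : ∃ f : ℕ → V,
        f = fun j => (((n+1 : ℕ) : ℝ))⁻¹ • ∑ i, g j i := ⟨_, rfl⟩
    have hgmem : ∀ j i, g j i ∈ C := fun j i => by
      simp only [hg]; split
      · exact hb i
      · exact ha i
    have hfmem : ∀ j, f j ∈ C := by
      intro j
      have hcu : f j = (((Finset.univ : Finset (Fin (n+1))).card : ℝ))⁻¹ • ∑ i, g j i := by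
        simp only [hf, Finset.card_univ, Fintype.card_fin]
      rw [hcu]
      exact aux_mean_mem hC (fun i _ => hgmem j i) (by simp)
    -- one step of the chain
    have hstep : ∀ j, j < k → R (f j) (f (j+1)) := by
      intro j hj
      have hjN : j < n + 1 := by omega
      have hgjf : g j ⟨j, hjN⟩ = a ⟨j, hjN⟩ := by simp [hg]
      have hgS : ∑ i ∈ Finset.univ.erase (⟨j, hjN⟩ : Fin (n+1)), g j i
          = (∑ i, g j i) - a ⟨j, hjN⟩ := by
        rw [Finset.sum_erase_eq_sub (Finset.mem_univ _), hgjf]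
      have hcard : (Finset.univ.erase (⟨j, hjN⟩ : Fin (n+1))).card = n := by
        rw [Finset.card_erase_of_mem (Finset.mem_univ _), Finset.card_univ, Fintype.card_fin]
        omega
      have hcC : ((n:ℝ))⁻¹ • ((∑ i, g j i) - a ⟨j, hjN⟩) ∈ C := by
        have hc2 : ((n:ℝ))⁻¹ • ((∑ i, g j i) - a ⟨j, hjN⟩)
            = (((Finset.univ.erase (⟨j, hjN⟩ : Fin (n+1))).card : ℝ))⁻¹ •
              ∑ i ∈ Finset.univ.erase (⟨j, hjN⟩ : Fin (n+1)), g j i := by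
          rw [hcard, hgS]
        rw [hc2]
        exact aux_mean_mem hC (fun i _ => hgmem j i) (by rw [hcard]; omega)
      have hq0 : (0:ℚ) < 1 / ((n+1 : ℕ):ℚ) := by positivity
      have hq1 : (1:ℚ) / ((n+1 : ℕ):ℚ) ≤ 1 := by
        rw [div_le_one (by positivity)]
        exact_mod_cast Nat.one_le_iff_ne_zero.mpr (by omega)
      have hiff := hind (a ⟨j, hjN⟩) (ha _) (b ⟨j, hjN⟩) (hb _)
        (((n:ℝ))⁻¹ • ((∑ i, g j i) - a ⟨j, hjN⟩)) hcC (1/((n+1 : ℕ):ℚ)) hq0 hq1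
      have hcast : (((1:ℚ)/((n+1 : ℕ):ℚ) : ℚ) : ℝ) = (((n+1 : ℕ):ℝ))⁻¹ := by push_cast; ring
      have hRab : R (a ⟨j, hjN⟩) (b ⟨j, hjN⟩) := hRk ⟨j, hjN⟩ hj
      have hstep' := hiff.mp hRab
      have hsum' : ∑ i, g (j+1) i = (∑ i, g j i) + (b ⟨j, hjN⟩ - a ⟨j, hjN⟩) := by
        have hdiff : ∀ i : Fin (n+1),
            g (j+1) i = g j i + (if i = ⟨j, hjN⟩ then b ⟨j, hjN⟩ - a ⟨j, hjN⟩ else 0) := by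
          intro i
          by_cases hij : i = ⟨j, hjN⟩
          · subst hij
            simp only [hg, if_pos rfl]
            simp only [show ((⟨j, hjN⟩ : Fin (n+1)) : ℕ) = j from rfl, lt_irrefl,
              Nat.lt_succ_self, if_true, if_neg, not_false_iff]
            abel
          · have hne : (i:ℕ) ≠ j := fun hh => hij (Fin.ext hh)
            simp only [hg, if_neg hij, add_zero]
            by_cases hlt : (i:ℕ) < j
            · rw [if_pos hlt, if_pos (by omega)]
            · rw [if_neg (show ¬ (i:ℕ) < j + 1 by omega), if_neg hlt]
        rw [Finset.sum_congr rfl (fun i _ => hdiff i), Finset.sum_add_distrib,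
          Finset.sum_ite_eq' Finset.univ, if_pos (Finset.mem_univ _)]
      have hNn : (((n+1 : ℕ)):ℝ) = (n:ℝ) + 1 := by push_cast; ring
      have e1 : (((1:ℚ)/((n+1 : ℕ):ℚ) : ℚ) : ℝ) • a ⟨j, hjN⟩ +
          (1 - (((1:ℚ)/((n+1 : ℕ):ℚ) : ℚ) : ℝ)) • (((n:ℝ))⁻¹ • ((∑ i, g j i) - a ⟨j, hjN⟩))
          = f j := by
        rw [hcast]
        simp only [hf]
        rw [hNn]
        match_scalars <;> field_simp <;> ring
      have e2 : (((1:ℚ)/((n+1 : ℕ):ℚ) : ℚ) : ℝ) • b ⟨j, hjN⟩ +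
          (1 - (((1:ℚ)/((n+1 : ℕ):ℚ) : ℚ) : ℝ)) • (((n:ℝ))⁻¹ • ((∑ i, g j i) - a ⟨j, hjN⟩))
          = f (j+1) := by
        rw [hcast]
        simp only [hf]
        rw [hsum', hNn]
        match_scalars <;> field_simp <;> ring
      rw [e1, e2] at hstep'
      exact hstep'
    -- transitive chain from f 0 to f k
    have hchain : ∀ j, j ≤ k → R (f 0) (f j) := by
      intro j
      induction j with
      | zero => intro _; exact hrefl _ (hfmem 0)
      | succ j ih =>
        intro hj
        exact htrans _ (hfmem 0) _ (hfmem j) _ (hfmem (j+1)) (ih (by omega)) (hstep j (by omega))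
    -- final application of independence
    have hkN : k < n + 1 := by omega
    have hkR : ((k : ℕ) : ℝ) ≠ 0 := Nat.cast_ne_zero.mpr (by omega)
    have hcardnot : (Finset.univ.filter (fun i : Fin (n+1) => ¬ (i:ℕ) < k)).card = n + 1 - k := by
      have h := Finset.card_filter_add_card_filter_not
        (s := (Finset.univ : Finset (Fin (n+1)))) (p := fun i : Fin (n+1) => (i:ℕ) < k)
      rw [aux_card_filter (n+1) k hkN, Finset.card_univ, Fintype.card_fin] at h
      omega
    have hTC : ((k:ℝ))⁻¹ • ∑ i ∈ Finset.univ.filter (fun i : Fin (n+1) => (i:ℕ) < k), b i ∈ C := by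
      have hc3 : ((k:ℝ))⁻¹ • ∑ i ∈ Finset.univ.filter (fun i : Fin (n+1) => (i:ℕ) < k), b i
          = (((Finset.univ.filter (fun i : Fin (n+1) => (i:ℕ) < k)).card : ℝ))⁻¹ •
            ∑ i ∈ Finset.univ.filter (fun i : Fin (n+1) => (i:ℕ) < k), b i := by
        rw [aux_card_filter (n+1) k hkN]
      rw [hc3]
      exact aux_mean_mem hC (fun i _ => hb i) (by rw [aux_card_filter (n+1) k hkN]; omega)
    have hsum_b : ∑ i, b i
        = (∑ i ∈ Finset.univ.filter (fun i : Fin (n+1) => (i:ℕ) < k), b i)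
          + (n + 1 - k) • b (Fin.last n) := by
      rw [← Finset.sum_filter_add_sum_filter_not Finset.univ (fun i : Fin (n+1) => (i:ℕ) < k) b]
      congr 1
      rw [Finset.sum_congr rfl (fun i hi => (htail i (not_lt.mp (Finset.mem_filter.mp hi).2)).2),
        Finset.sum_const, hcardnot]
    have hsum_gk : ∑ i, g k i
        = (∑ i ∈ Finset.univ.filter (fun i : Fin (n+1) => (i:ℕ) < k), b i)
          + (n + 1 - k) • a (Fin.last n) := by
      simp only [hg]
      rw [Finset.sum_ite]
      congr 1
      rw [Finset.sum_congr rfl (fun i hi => (htail i (not_lt.mp (Finset.mem_filter.mp hi).2)).1),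
        Finset.sum_const, hcardnot]
    have hf0 : f 0 = (((n+1 : ℕ):ℝ))⁻¹ •
        ((∑ i ∈ Finset.univ.filter (fun i : Fin (n+1) => (i:ℕ) < k), b i)
          + ((n + 1 - k : ℕ):ℝ) • b (Fin.last n)) := by
      simp only [hf]
      have hg0 : ∑ i, g 0 i = ∑ i, a i := Finset.sum_congr rfl (fun i _ => by simp [hg])
      rw [hg0, hsum, hsum_b, Nat.cast_smul_eq_nsmul]
    have hfk : f k = (((n+1 : ℕ):ℝ))⁻¹ •
        ((∑ i ∈ Finset.univ.filter (fun i : Fin (n+1) => (i:ℕ) < k), b i)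
          + ((n + 1 - k : ℕ):ℝ) • a (Fin.last n)) := by
      simp only [hf]
      rw [hsum_gk, Nat.cast_smul_eq_nsmul]
    have hr0 : (0:ℚ) < ((n+1-k : ℕ):ℚ)/((n+1 : ℕ):ℚ) := by
      apply div_pos
      · exact_mod_cast (by omega : 0 < n + 1 - k)
      · exact_mod_cast (by omega : 0 < n + 1)
    have hr1 : ((n+1-k : ℕ):ℚ)/((n+1 : ℕ):ℚ) ≤ 1 := by
      rw [div_le_one (by exact_mod_cast (by omega : 0 < n + 1))]
      exact_mod_cast (by omega : n + 1 - k ≤ n + 1)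
    have hiff := hind (b (Fin.last n)) (hb _) (a (Fin.last n)) (ha _)
      (((k:ℝ))⁻¹ • ∑ i ∈ Finset.univ.filter (fun i : Fin (n+1) => (i:ℕ) < k), b i) hTC
      (((n+1-k : ℕ):ℚ)/((n+1 : ℕ):ℚ)) hr0 hr1
    have hcast2 : ((((n+1-k : ℕ):ℚ)/((n+1 : ℕ):ℚ) : ℚ) : ℝ)
        = ((n+1-k : ℕ):ℝ)/((n+1 : ℕ):ℝ) := by push_cast; ring
    apply hiff.mpr
    have hNkt : ((n+1 : ℕ):ℝ) = ((k : ℕ):ℝ) + ((n+1-k : ℕ):ℝ) := by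
      rw [Nat.cast_sub (by omega : k ≤ n + 1)]
      push_cast; ring
    have e3 : ((((n+1-k : ℕ):ℚ)/((n+1 : ℕ):ℚ) : ℚ) : ℝ) • b (Fin.last n) +
        (1 - ((((n+1-k : ℕ):ℚ)/((n+1 : ℕ):ℚ) : ℚ) : ℝ)) •
        (((k:ℝ))⁻¹ • ∑ i ∈ Finset.univ.filter (fun i : Fin (n+1) => (i:ℕ) < k), b i) = f 0 := by
      rw [hcast2, hf0, hNkt]
      match_scalars <;> field_simp <;> ring
    have e4 : ((((n+1-k : ℕ):ℚ)/((n+1 : ℕ):ℚ) : ℚ) : ℝ) • a (Fin.last n) +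
        (1 - ((((n+1-k : ℕ):ℚ)/((n+1 : ℕ):ℚ) : ℚ) : ℝ)) •
        (((k:ℝ))⁻¹ • ∑ i ∈ Finset.univ.filter (fun i : Fin (n+1) => (i:ℕ) < k), b i) = f k := by
      rw [hcast2, hfk, hNkt]
      match_scalars <;> field_simp <;> ring
    rw [e3, e4]
    exact hchain k le_rfl

end Bwd

/-- A relation on a convex subset of `ℝ^n` satisfies extended mixture cancellation
iff it is reflexive, transitive, and satisfies rational mixture independence. -/
theorem extMixCancel_iff_refl_trans_ratMixIndep
    {n : ℕ} (C : Set (Fin n → ℝ)) (R : (Fin n → ℝ) → (Fin n → ℝ) → Prop)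
    (hC : Convex ℝ C) :
    ExtMixCancel C R ↔
      ((∀ a ∈ C, R a a) ∧
       (∀ a ∈ C, ∀ b ∈ C, ∀ c ∈ C, R a b → R b c → R a c) ∧
       RatMixIndep C R) := by
  constructor
  · intro h
    exact ⟨aux_fwd_refl h, aux_fwd_trans h, aux_fwd_indep hC h⟩
  · rintro ⟨h1, h2, h3⟩
    exact aux_backward hC h1 h2 h3
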